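/- Every element of M = {(x,y) ∈ ℕ² : 7 divides 4x+5y} can be written uniquely as λ₁(7,0) + λ₂(0,7) + m(1,2) + n(4,1) with λ₁, λ₂ ∈ ℕ and (m,n) ∈ ℕ² satisfying m + 4n < 7 and 2m + n < 7. -/
import Mathlib


/-- Every element of `M = {(x,y) ∈ ℕ² : 7 ∣ 4x + 5y}` can be written uniquely
as `λ₁(7,0) + λ₂(0,7) + m(1,2) + n(4,1)` with `λ₁, λ₂, m, n ∈ ℕ` and `m + 4n < 7`,
`2m + n < 7`. -/
theorem stmt_10 (M : Set (ℕ × ℕ)) (hM : M = {p | 7 ∣ 4 * p.1 + 5 * p.2})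
    (x : ℕ × ℕ) (hx : x ∈ M) :
    ∃! p : ℕ × ℕ × ℕ × ℕ,
      (p.2.2.1 + 4 * p.2.2.2 < 7 ∧ 2 * p.2.2.1 + p.2.2.2 < 7) ∧
      x = p.1 • ((7, 0) : ℕ × ℕ) + p.2.1 • ((0, 7) : ℕ × ℕ)
            + p.2.2.1 • ((1, 2) : ℕ × ℕ) + p.2.2.2 • ((4, 1) : ℕ × ℕ) := by
  subst hM
  simp only [Set.mem_setOf_eq] at hx
  refine ⟨(x.1 / 7, x.2 / 7, if x.1 % 7 < 4 then x.1 % 7 else x.1 % 7 - 4,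
      if x.1 % 7 < 4 then 0 else 1), ⟨?_, ?_⟩, ?_⟩
  · dsimp only
    split_ifs <;> constructor <;> omega
  · dsimp only
    simp only [Prod.smul_mk, smul_eq_mul, Prod.mk_add_mk, Prod.ext_iff]
    split_ifs <;> constructor <;> simp only [mul_zero, mul_one, add_zero, zero_add] <;> omega
  · rintro ⟨l1, l2, m, n⟩ ⟨⟨h1, h2⟩, heq⟩
    dsimp only at h1 h2 heq ⊢
    simp only [Prod.smul_mk, smul_eq_mul, Prod.mk_add_mk, Prod.ext_iff] at heq
    obtain ⟨e1, e2⟩ := heq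
    simp only [mul_zero, mul_one, add_zero, zero_add] at e1 e2
    simp only [Prod.mk.injEq]
    clear hx
    have hm : x.1 % 7 = m + 4 * n := by omega
    refine ⟨?_, ?_, ?_, ?_⟩ <;> try split_ifs
    all_goals omega
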